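/- Define G(p) = t_e π̄ − t_s π̄ F(p)·(1 − (t_r/t_k)(1 − F(p))) + t_s ∫_{π̲}^{p} x f(x) dx. Then G is nonincreasing on the region {p ∈ [π̲, π̄] : F(p) ≥ 1/2}: for all p ≤ p' in [π̲, π̄] with F(p) ≥ 1/2, G(p') ≤ G(p). (Indeed G'(p) = (p − π̄) t_s f(p) + (t_r t_s/t_k) π̄ f(p)(1 − 2F(p)) ≤ 0 there.) -/
import Mathlib


/-- `G(p) = t_e π̄ − t_s π̄ F(p)(1 − (t_r/t_k)(1 − F(p))) + t_s ∫_{π̲}^{p} x f(x) dx`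
is nonincreasing on `{p ∈ [π̲, π̄] : F(p) ≥ 1/2}`. -/
theorem stmt_14
    (πlo πhi : ℝ) (f F : ℝ → ℝ)
    (hπlo : 0 ≤ πlo) (hlt : πlo < πhi)
    (hcont : ContinuousOn f (Set.Icc πlo πhi))
    (hnn : ∀ x ∈ Set.Icc πlo πhi, 0 ≤ f x)
    (hanti : ∀ x ∈ Set.Icc πlo πhi, ∀ y ∈ Set.Icc πlo πhi, x ≤ y → f y ≤ f x)
    (hone : (∫ x in πlo..πhi, f x) = 1)
    (hF : ∀ p, F p = ∫ x in πlo..p, f x)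
    (tk te ts tr : ℝ) (htk : 0 < tk) (hte : 0 < te) (hts : 0 < ts) (htr : 0 < tr)
    (G : ℝ → ℝ)
    (hG : ∀ p, G p = te * πhi - ts * πhi * F p * (1 - (tr / tk) * (1 - F p)) +
      ts * ∫ x in πlo..p, x * f x)
    (p p' : ℝ) (hp : p ∈ Set.Icc πlo πhi) (hp' : p' ∈ Set.Icc πlo πhi)
    (hpp' : p ≤ p') (hFp : 1 / 2 ≤ F p) :
    G p' ≤ G p := by
  obtain ⟨hp1, hp2⟩ := hp
  obtain ⟨hp'1, hp'2⟩ := hp'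
  have hsub1 : Set.uIcc πlo p ⊆ Set.Icc πlo πhi := by
    rw [Set.uIcc_of_le hp1]; exact Set.Icc_subset_Icc le_rfl hp2
  have hsub2 : Set.uIcc p p' ⊆ Set.Icc πlo πhi := by
    rw [Set.uIcc_of_le hpp']; exact Set.Icc_subset_Icc hp1 hp'2
  have hi1 : IntervalIntegrable f MeasureTheory.volume πlo p :=
    (hcont.mono hsub1).intervalIntegrable
  have hi2 : IntervalIntegrable f MeasureTheory.volume p p' :=
    (hcont.mono hsub2).intervalIntegrable
  have hcx : ContinuousOn (fun x => x * f x) (Set.Icc πlo πhi) :=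
    continuousOn_id.mul hcont
  have hj1 : IntervalIntegrable (fun x => x * f x) MeasureTheory.volume πlo p :=
    (hcx.mono hsub1).intervalIntegrable
  have hj2 : IntervalIntegrable (fun x => x * f x) MeasureTheory.volume p p' :=
    (hcx.mono hsub2).intervalIntegrable
  have hFdiff : F p' - F p = ∫ x in p..p', f x := by
    rw [hF, hF, ← intervalIntegral.integral_add_adjacent_intervals hi1 hi2]
    ring
  have hJdiff : (∫ x in πlo..p', x * f x) - (∫ x in πlo..p, x * f x)
      = ∫ x in p..p', x * f x := by
    rw [← intervalIntegral.integral_add_adjacent_intervals hj1 hj2]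
    ring
  -- b - a ≥ 0
  have hba : 0 ≤ F p' - F p := by
    rw [hFdiff]
    apply intervalIntegral.integral_nonneg hpp'
    intro x hx
    exact hnn x (hsub2 (by rw [Set.uIcc_of_le hpp']; exact hx))
  -- ∫ p..p' x f ≤ πhi (F p' - F p)
  have hJle : (∫ x in p..p', x * f x) ≤ πhi * (F p' - F p) := by
    rw [hFdiff, ← intervalIntegral.integral_const_mul]
    apply intervalIntegral.integral_mono_on hpp' hj2
      ((hi2.const_mul πhi))
    intro x hx
    have hx' : x ∈ Set.Icc πlo πhi := hsub2 (by rw [Set.uIcc_of_le hpp']; exact hx)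
    exact mul_le_mul_of_nonneg_right hx'.2 (hnn x hx')
  have hπhi : 0 < πhi := lt_of_le_of_lt hπlo hlt
  have hc : 0 < tr / tk := div_pos htr htk
  set a := F p with ha
  set b := F p' with hb
  have hab : a ≤ b := by linarith
  have hs : 1 ≤ a + b := by linarith
  -- key algebraic inequality
  have hkey : b * (1 - b) - a * (1 - a) ≤ 0 := by nlinarith [mul_nonneg hba (sub_nonneg.mpr hs)]
  rw [hG, hG]
  have hJ : (∫ x in πlo..p', x * f x) ≤ (∫ x in πlo..p, x * f x) + πhi * (b - a) := by
    have := hJdiff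
    linarith [hJle]
  nlinarith [mul_le_mul_of_nonneg_left hJ hts.le,
    mul_nonneg (mul_nonneg hts.le hπhi.le) (mul_nonneg hc.le (neg_nonneg.mpr hkey))]
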